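/- Slope-one points force a sign condition: assume F has a bounded density. Let v be a locally Lipschitz viscosity supersolution of the HJB equation max{1−u'(x), L*(u)(x)}=0 on (0,∞) satisfying v(y)−v(x) ≥ y−x for 0≤x<y. If at some x>0 the right derivative v'(x⁺) exists and equals 1, then Λ(x) := (p+rx) − (c+β)v(x) + β∫₀ˣ v(x−α)dF(α) ≤ 0. -/

import Mathlib

open MeasureTheory Set Filter
open Topology

/-- The operator `L_γ(u,f)(x)` from the paper: second-order integro-differential
operator with drift/volatility controlled by `γ`, integral term with respect to the
Lebesgue–Stieltjes measure of the claim-size distribution `F`. -/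
noncomputable def Lg (p β c r σ : ℝ) (F : StieltjesFunction ℝ)
    (γ : ℝ) (u f : ℝ → ℝ) (x : ℝ) : ℝ :=
  σ ^ 2 * γ ^ 2 * x ^ 2 * deriv (deriv f) x / 2 + (p + r * γ * x) * deriv f x
    - (c + β) * u x + β * ∫ α in Icc (0 : ℝ) x, u (x - α) ∂F.measure

/-- `L*(u,f)(x) = sup_{γ ∈ [0,1]} L_γ(u,f)(x)`. -/
noncomputable def Lstar (p β c r σ : ℝ) (F : StieltjesFunction ℝ)
    (u f : ℝ → ℝ) (x : ℝ) : ℝ :=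
  ⨆ γ : Icc (0 : ℝ) 1, Lg p β c r σ F (γ : ℝ) u f x

/-- `u` is a viscosity supersolution of `max {1 - u'(x), L*(u)(x)} = 0` at `x ∈ (0,∞)`:
every `C²` test function `φ` such that `u - φ` attains its minimum over `(0,∞)` at `x`
satisfies `max {1 - φ'(x), sup_γ L_γ(u,φ)(x)} ≤ 0`. -/
def SupersolHJBAt (p β c r σ : ℝ) (F : StieltjesFunction ℝ) (u : ℝ → ℝ) (x : ℝ) : Prop :=
  ∀ φ : ℝ → ℝ, ContDiff ℝ 2 φ → (∀ y ∈ Ioi (0 : ℝ), u x - φ x ≤ u y - φ y) →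
    max (1 - deriv φ x) (Lstar p β c r σ F u φ x) ≤ 0

/-- `u` is a viscosity subsolution of `max {1 - u'(x), L*(u)(x)} = 0` at `x ∈ (0,∞)`:
every `C²` test function `ψ` such that `u - ψ` attains its maximum over `(0,∞)` at `x`
satisfies `max {1 - ψ'(x), sup_γ L_γ(u,ψ)(x)} ≥ 0`. -/
def SubsolHJBAt (p β c r σ : ℝ) (F : StieltjesFunction ℝ) (u : ℝ → ℝ) (x : ℝ) : Prop :=
  ∀ ψ : ℝ → ℝ, ContDiff ℝ 2 ψ → (∀ y ∈ Ioi (0 : ℝ), u y - ψ y ≤ u x - ψ x) →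
    0 ≤ max (1 - deriv ψ x) (Lstar p β c r σ F u ψ x)

private lemma aux_conclude (L A D : ℝ) (hA0 : 0 ≤ A) (hD0 : 0 ≤ D)
    (H : ∀ ε : ℝ, 0 < ε → ε ≤ 1/6 → L ≤ A * ε + D * Real.sqrt (6 * ε)) : L ≤ 0 := by
  by_contra hcon
  push_neg at hcon
  set ε : ℝ := min (1/6) (min (L/(4*(A+1))) ((L/(4*(D+1)))^2/6)) with hεdef
  have hd1 : (0:ℝ) < L/(4*(A+1)) := div_pos hcon (by positivity)
  have hd2 : (0:ℝ) < (L/(4*(D+1)))^2/6 :=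
    div_pos (pow_pos (div_pos hcon (by positivity)) 2) (by norm_num)
  have hεpos : 0 < ε := lt_min (by norm_num) (lt_min hd1 hd2)
  have h1 := H ε hεpos (min_le_left _ _)
  have hε1 : ε ≤ L/(4*(A+1)) := le_trans (min_le_right _ _) (min_le_left _ _)
  have hε2 : ε ≤ (L/(4*(D+1)))^2/6 := le_trans (min_le_right _ _) (min_le_right _ _)
  have h2 : A * ε ≤ L/4 := by
    have h3 : A * ε ≤ A * (L/(4*(A+1))) := mul_le_mul_of_nonneg_left hε1 hA0
    have h4 : A * (L/(4*(A+1))) ≤ L/4 := by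
      rw [mul_div_assoc', div_le_div_iff₀ (by positivity) (by norm_num)]
      nlinarith
    linarith
  have h3 : Real.sqrt (6*ε) ≤ L/(4*(D+1)) := by
    have h5 : 6*ε ≤ (L/(4*(D+1)))^2 := by linarith
    calc Real.sqrt (6*ε) ≤ Real.sqrt ((L/(4*(D+1)))^2) := Real.sqrt_le_sqrt h5
      _ = L/(4*(D+1)) := Real.sqrt_sq (by positivity)
  have h4 : D * Real.sqrt (6*ε) ≤ L/4 := by
    have h6 : D * Real.sqrt (6*ε) ≤ D * (L/(4*(D+1))) := mul_le_mul_of_nonneg_left h3 hD0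
    have h7 : D * (L/(4*(D+1))) ≤ L/4 := by
      rw [mul_div_assoc', div_le_div_iff₀ (by positivity) (by norm_num)]
      nlinarith
    linarith
  linarith

private lemma aux_contDiff (a b B xx : ℝ) :
    ContDiff ℝ 2 (fun y : ℝ => a + b*(y-xx) - (y-xx)^3/6 - B * expNegInvGlue (xx - y)) := by
  have h1 : ContDiff ℝ 2 (fun y : ℝ => y - xx) := contDiff_id.sub contDiff_const
  have h2 : ContDiff ℝ 2 (fun y : ℝ => expNegInvGlue (xx - y)) :=
    expNegInvGlue.contDiff.comp (contDiff_const.sub contDiff_id)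
  exact (((contDiff_const.add (contDiff_const.mul h1)).sub ((h1.pow 3).div_const 6)).sub
    (contDiff_const.mul h2))

private lemma aux_deriv1 (a b B xx : ℝ) :
    ∀ y ∈ Ioi xx, deriv (fun y : ℝ => a + b*(y-xx) - (y-xx)^3/6 - B * expNegInvGlue (xx - y)) y
      = b - (y-xx)^2/2 := by
  intro y hy
  have hev : (fun y : ℝ => a + b*(y-xx) - (y-xx)^3/6 - B * expNegInvGlue (xx - y))
      =ᶠ[𝓝 y] (fun y : ℝ => a + b*(y-xx) - (y-xx)^3/6) := by
    filter_upwards [isOpen_Ioi.mem_nhds hy] with z hz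
    rw [expNegInvGlue.zero_of_nonpos (by simp only [mem_Ioi] at hz; linarith)]
    ring
  rw [hev.deriv_eq]
  have h1 : HasDerivAt (fun y : ℝ => y - xx) 1 y := (hasDerivAt_id y).sub_const xx
  have h2 : HasDerivAt (fun y : ℝ => a + b*(y-xx) - (y-xx)^3/6)
      (b*1 - 3*(y-xx)^2*1/6) y := ((h1.const_mul b).const_add a).sub ((h1.pow 3).div_const 6)
  rw [h2.deriv]; ring

private lemma aux_deriv2 (a b B xx : ℝ) {y : ℝ} (hy : xx < y) :
    deriv (deriv (fun y : ℝ => a + b*(y-xx) - (y-xx)^3/6 - B * expNegInvGlue (xx - y))) y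
      = -(y-xx) := by
  have hev : deriv (fun y : ℝ => a + b*(y-xx) - (y-xx)^3/6 - B * expNegInvGlue (xx - y))
      =ᶠ[𝓝 y] (fun y : ℝ => b - (y-xx)^2/2) := by
    filter_upwards [isOpen_Ioi.mem_nhds hy] with z hz
    exact aux_deriv1 a b B xx z hz
  rw [hev.deriv_eq]
  have h1 : HasDerivAt (fun y : ℝ => y - xx) 1 y := (hasDerivAt_id y).sub_const xx
  have h2 : HasDerivAt (fun y : ℝ => b - (y-xx)^2/2)
      (-(2*(y-xx)^1*1/2)) y := ((h1.pow 2).div_const 2).const_sub b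
  rw [h2.deriv]; ring

set_option maxHeartbeats 8000000 in
private lemma aux_final (p β c r σ x y T ε vx vy J1 I M Cf : ℝ)
    (hβ : 0 < β) (hc : 0 < c) (hσ : 0 < σ)
    (hx : 0 < x) (hεpos : 0 < ε) (hp : 0 < p) (hr : 0 < r)
    (hyx : x < y) (hyT : y ≤ x + T) (hT1 : T ≤ 1) (hT2 : T^2 = 6*ε)
    (hM0 : 0 ≤ M) (hCf : 0 ≤ Cf)
    (hkey : σ^2*1^2*y^2*(-(y-x))/2 + (p + r*1*y)*((1+ε) - (y-x)^2/2) - (c+β)*vy + β*I ≤ 0)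
    (hvy : vy - vx ≤ 2*(y-x))
    (hJ : J1 ≤ I + M*(Cf*(y-x))) :
    (p + r*x) - (c+β)*vx + β*J1 ≤
      (3*(p + r*(x+1)))*ε + (σ^2*(x+1)^2/2 + 2*(c+β) + β*M*Cf)*T := by
  have ht0 : 0 < y - x := by linarith
  have htT : y - x ≤ T := by linarith
  have hT0 : 0 < T := lt_of_lt_of_le ht0 htT
  have ht2 : (y-x)^2 ≤ 6*ε := by nlinarith
  have hy1 : y ≤ x + 1 := by linarith
  have e1 : (p + r*x) ≤ (p + r*y)*((1+ε) - (y-x)^2/2) + (p + r*(x+1))*((y-x)^2/2) := by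
    nlinarith [mul_nonneg hεpos.le (by nlinarith : (0:ℝ) ≤ p + r*y),
      mul_nonneg (by positivity : (0:ℝ) ≤ (y-x)^2/2) (by nlinarith : (0:ℝ) ≤ r*(x+1-y)),
      mul_pos hr ht0]
  have e2 : σ^2*y^2*(y-x) ≤ σ^2*(x+1)^2*T := by
    have hy2 : y^2 ≤ (x+1)^2 := by nlinarith
    have a1 : σ^2*y^2*(y-x) ≤ σ^2*(x+1)^2*(y-x) := by
      nlinarith [mul_le_mul_of_nonneg_left hy2 (mul_nonneg (sq_nonneg σ) ht0.le)]
    have a2 : σ^2*(x+1)^2*(y-x) ≤ σ^2*(x+1)^2*T := by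
      nlinarith [mul_le_mul_of_nonneg_left htT (mul_nonneg (sq_nonneg σ) (sq_nonneg (x+1)))]
    linarith
  have e3 : β*J1 ≤ β*I + β*(M*(Cf*(y-x))) := by nlinarith [mul_le_mul_of_nonneg_left hJ hβ.le]
  have e4 : β*(M*(Cf*(y-x))) ≤ β*M*Cf*T := by
    nlinarith [mul_nonneg (mul_nonneg hβ.le hM0) hCf]
  have e5 : (c+β)*vy - (c+β)*vx ≤ 2*(c+β)*T := by
    nlinarith [mul_le_mul_of_nonneg_left hvy (by linarith : (0:ℝ) ≤ c+β)]
  have e6 : (p + r*(x+1))*((y-x)^2/2) ≤ (3*(p + r*(x+1)))*ε := by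
    nlinarith [ht2, (by nlinarith : (0:ℝ) ≤ p + r*(x+1))]
  linarith [hkey, e1, e2, e3, e4, e5, e6]

set_option maxHeartbeats 1000000
/-- **Slope-one points force a sign condition** (from Lemma 8.1): assume `F` has a
bounded density. If `v` is a locally Lipschitz viscosity supersolution of the HJB
equation on `(0,∞)` with `v(y) - v(x) ≥ y - x` for `0 ≤ x < y`, and at some `x > 0` the
right derivative of `v` exists and equals `1`, then
`Λ(x) = (p + rx) - (c+β)v(x) + β∫₀ˣ v(x-α)dF(α) ≤ 0`. -/
theorem slope_one_sign_condition
    (p β c r σ : ℝ) (hp : 0 < p) (hβ : 0 < β) (hr : 0 < r) (hrc : r < c) (hσ : 0 < σ)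
    (F : StieltjesFunction ℝ)
    (hF01 : ∀ x : ℝ, F x ∈ Icc (0 : ℝ) 1)
    (hF0 : ∀ x : ℝ, x ≤ 0 → F x = 0)
    (hF1 : Tendsto (⇑F) atTop (nhds 1))
    (hFmean : IntegrableOn id (Ici (0 : ℝ)) F.measure)
    (hFd : ∃ f : ℝ → ℝ, Measurable f ∧ (∃ C : ℝ, ∀ t, |f t| ≤ C) ∧ (∀ t, 0 ≤ f t) ∧
      (∀ t : ℝ, t ≤ 0 → f t = 0) ∧ ∀ x : ℝ, F x = ∫ t in (0 : ℝ)..x, f t)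
    (v : ℝ → ℝ)
    (hA1 : ∀ a b : ℝ, 0 ≤ a → a < b → ∃ K : NNReal, LipschitzOnWith K v (Icc a b))
    (hsuper : ∀ x ∈ Ioi (0 : ℝ), SupersolHJBAt p β c r σ F v x)
    (hA2 : ∀ x y : ℝ, 0 ≤ x → x < y → y - x ≤ v y - v x)
    (x : ℝ) (hx : 0 < x)
    (hd : HasDerivWithinAt v 1 (Ici x) x) :
    (p + r * x) - (c + β) * v x
      + β * ∫ α in Icc (0 : ℝ) x, v (x - α) ∂F.measure ≤ 0 := by
  classical
  obtain ⟨f, hfmeas, ⟨Cf, hfC⟩, hfnn, hf0, hfF⟩ := hFd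
  have hCf : 0 ≤ Cf := le_trans (abs_nonneg _) (hfC 0)
  obtain ⟨K0, hK0⟩ := hA1 0 (x + 1) le_rfl (by linarith)
  set K' : ℝ := (K0 : ℝ) + 1 with hK'def
  have hK'pos : 0 < K' := by positivity
  have hvlip : ∀ a ∈ Icc (0:ℝ) (x+1), ∀ b ∈ Icc (0:ℝ) (x+1), |v a - v b| ≤ K' * |a - b| := by
    intro a ha b hb
    have h1 := hK0.dist_le_mul a ha b hb
    rw [Real.dist_eq, Real.dist_eq] at h1
    have h2 : (0:ℝ) ≤ |a - b| := abs_nonneg _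
    have h2b : (K0:ℝ) * |a - b| ≤ K' * |a - b| :=
      mul_le_mul_of_nonneg_right (by rw [hK'def]; linarith) h2
    linarith only [h1, h2b]
  have hvcont : ContinuousOn v (Icc 0 (x+1)) := hK0.continuousOn
  set M : ℝ := |v 0| + K' * (x + 1) with hMdef
  have hM0 : 0 ≤ M := by positivity
  have hvM : ∀ s ∈ Icc (0:ℝ) (x+1), |v s| ≤ M := by
    intro s hs
    have h1 := hvlip s hs 0 ⟨le_rfl, by linarith⟩
    have h2 : |s - 0| ≤ x + 1 := by
      rw [sub_zero, abs_of_nonneg hs.1]; exact hs.2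
    have h3 : |v s| - |v 0| ≤ |v s - v 0| := abs_sub_abs_le_abs_sub _ _
    have h4 : K' * |s - 0| ≤ K' * (x + 1) := mul_le_mul_of_nonneg_left h2 hK'pos.le
    linarith only [h1, h3, h4, hMdef]
  clear_value K' M
  have hA0' : (0:ℝ) ≤ 3*(p + r*(x+1)) := by
    linarith only [hp, mul_pos hr (show (0:ℝ) < x+1 by linarith)]
  have hD0' : (0:ℝ) ≤ σ^2*(x+1)^2/2 + 2*(c+β) + β*M*Cf := by
    linarith only [mul_nonneg (mul_nonneg hβ.le hM0) hCf,
      mul_nonneg (sq_nonneg σ) (sq_nonneg (x+1)), hr, hrc, hβ]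
  refine aux_conclude _ (3*(p + r*(x+1))) (σ^2*(x+1)^2/2 + 2*(c+β) + β*M*Cf) hA0' hD0' ?_
  intro ε hεpos hε6
  set T := Real.sqrt (6*ε) with hTdef
  have hT0 : 0 < T := Real.sqrt_pos.mpr (by linarith)
  have hT2 : T^2 = 6*ε := Real.sq_sqrt (by linarith)
  have hT1 : T ≤ 1 := by linarith only [hT2, sq_nonneg (T-1), hε6]
  clear_value T
  -- extract a point with small slope on the right
  have hslope : Tendsto (slope v x) (𝓝[>] x) (𝓝 1) := by
    have h1 := hasDerivWithinAt_iff_tendsto_slope.mp hd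
    rwa [Set.Ici_sdiff_left] at h1
  have hev : ∀ᶠ z in 𝓝[>] x, slope v x z < 1 + ε/2 :=
    hslope.eventually_lt_const (by linarith)
  have hmemIoo : Ioo x (x + T/2) ∈ 𝓝[>] x :=
    Ioo_mem_nhdsGT_of_mem ⟨le_rfl, by linarith⟩
  obtain ⟨z, hz1, hz2⟩ := (hev.and (eventually_mem_set.mpr hmemIoo)).exists
  obtain ⟨hz2a, hz2b⟩ := hz2
  set h : ℝ := z - x with hhdef
  have hh0 : 0 < h := by simp only [hhdef]; linarith
  have hhT : h < T/2 := by simp only [hhdef]; linarith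
  have hvh : v (x + h) - v x ≤ (1 + ε/2) * h := by
    have hxz : x + h = z := by simp only [hhdef]; ring
    rw [hxz, hhdef]
    rw [slope_def_field] at hz1
    have h4 := (div_lt_iff₀ (by linarith : (0:ℝ) < z - x)).mp hz1
    linarith only [h4]
  clear_value h
  -- the test function
  set u₀ : ℝ := min 1 (min x (ε*h/(8*(K'+1)))) with hu₀def
  have hu₀pos : 0 < u₀ :=
    lt_min one_pos (lt_min hx (div_pos (mul_pos hεpos hh0) (by positivity)))
  have hu₀1 : u₀ ≤ 1 := min_le_left _ _
  have hu₀x : u₀ ≤ x := (min_le_right _ _).trans (min_le_left _ _)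
  have hu₀ε : u₀ ≤ ε*h/(8*(K'+1)) := (min_le_right _ _).trans (min_le_right _ _)
  set B : ℝ := (K'*x + x^3/6) * Real.exp (1/u₀) with hBdef
  have hB0 : 0 ≤ B := by positivity
  clear_value u₀ B
  set φ : ℝ → ℝ := fun y => v x + (1+ε)*(y-x) - (y-x)^3/6 - B * expNegInvGlue (x - y)
    with hφdef
  have hφC2 : ContDiff ℝ 2 φ := aux_contDiff (v x) (1+ε) B x
  have hE0 : ∀ y, x ≤ y → expNegInvGlue (x - y) = 0 := fun y hy =>
    expNegInvGlue.zero_of_nonpos (by linarith)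
  have hgval : ∀ y, v y - φ y
      = v y - v x - (1+ε)*(y-x) + (y-x)^3/6 + B * expNegInvGlue (x-y) := by
    intro y; simp only [hφdef]; ring
  clear_value φ
  -- minimum over [x, x+T]
  have hsub : Icc x (x+T) ⊆ Icc 0 (x+1) := Icc_subset_Icc (le_of_lt hx) (by linarith)
  have hgc : ContinuousOn (fun y => v y - φ y) (Icc x (x+T)) :=
    (hvcont.mono hsub).sub hφC2.continuous.continuousOn
  obtain ⟨y₀, hy₀mem, hy₀min⟩ :=
    isCompact_Icc.exists_isMinOn (nonempty_Icc.mpr (by linarith)) hgc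
  have hy₀min' : ∀ y ∈ Icc x (x+T), v y₀ - φ y₀ ≤ v y - φ y := fun y hy => hy₀min hy
  have hxh_mem : x + h ∈ Icc x (x+T) := ⟨by linarith, by linarith⟩
  have hgxh : v (x+h) - φ (x+h) ≤ -(ε*h/4) := by
    rw [hgval, hE0 _ (by linarith), show x + h - x = h by ring]
    have hhsq : h^2 < T^2/4 := by
      have h5 := mul_pos (sub_pos.mpr hhT) (show (0:ℝ) < T/2 + h by linarith)
      nlinarith only [h5]
    rw [hT2] at hhsq
    have hcub := mul_lt_mul_of_pos_right hhsq hh0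
    nlinarith only [hcub, hvh, mul_pos hεpos hh0]
  have hgy₀ : v y₀ - φ y₀ ≤ -(ε*h/4) := le_trans (hy₀min' _ hxh_mem) hgxh
  have hy₀x : x < y₀ := by
    rcases lt_or_eq_of_le hy₀mem.1 with h1 | h1
    · exact h1
    · exfalso
      have hgx : v x - φ x = 0 := by
        rw [hgval, hE0 x le_rfl]; ring
      rw [← h1, hgx] at hgy₀
      linarith only [hgy₀, mul_pos hεpos hh0]
  have hy₀T : y₀ ≤ x + T := hy₀mem.2
  -- global minimality on (0, ∞)
  have hmin : ∀ y ∈ Ioi (0:ℝ), v y₀ - φ y₀ ≤ v y - φ y := by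
    intro y hy
    rw [mem_Ioi] at hy
    rcases le_or_gt y x with h1 | h1
    · have hs0 : 0 ≤ x - y := by linarith
      have hsx : x - y ≤ x := by linarith
      have hvy : -(K' * (x-y)) ≤ v y - v x := by
        have h5 := hvlip y ⟨le_of_lt hy, by linarith⟩ x ⟨le_of_lt hx, by linarith⟩
        rw [show |y - x| = x - y by rw [abs_sub_comm, abs_of_nonneg hs0]] at h5
        linarith only [h5, neg_abs_le (v y - v x)]
      rw [hgval y]
      rcases le_or_gt (x - y) u₀ with h2 | h2
      · have hEnn : 0 ≤ expNegInvGlue (x - y) := expNegInvGlue.nonneg _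
        have hKu : (K'+1) * u₀ ≤ ε*h/8 := by
          have h6 := mul_le_mul_of_nonneg_left hu₀ε (by positivity : (0:ℝ) ≤ K'+1)
          have h7 : (K'+1)*(ε*h/(8*(K'+1))) = ε*h/8 := by
            field_simp
          linarith only [h6, h7]
        have hcube : (x-y)^3 ≤ (x-y) := by
          have hs1 : x - y ≤ 1 := le_trans h2 hu₀1
          have h8 : (x-y)*(x-y) ≤ (x-y)*1 := mul_le_mul_of_nonneg_left hs1 hs0
          have h9 : (x-y)*((x-y)^2) ≤ (x-y)*1 := by
            nlinarith only [h8, hs0, hs1]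
          nlinarith only [h9, hs0, hs1]
        linarith only [hgy₀, hvy, hcube, hKu, mul_nonneg hB0 hEnn,
          mul_pos hεpos hh0, mul_le_mul_of_nonneg_left h2 (by positivity : (0:ℝ) ≤ K'+1),
          mul_nonneg hεpos.le hs0, hs0]
      · have hsE : expNegInvGlue (x - y) = Real.exp (-(x-y)⁻¹) := by
          rw [expNegInvGlue, if_neg (not_le.mpr (lt_trans hu₀pos h2))]
        have h1u : (x-y)⁻¹ ≤ 1/u₀ := by
          rw [one_div]
          exact inv_anti₀ hu₀pos h2.le
        have hge1 : (1:ℝ) ≤ Real.exp (1/u₀ + -(x-y)⁻¹) := Real.one_le_exp (by linarith)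
        have hbase : (0:ℝ) ≤ K'*x + x^3/6 := by
          linarith only [mul_pos hK'pos hx, pow_pos hx 3]
        have hBE : K'*x + x^3/6 ≤ B * expNegInvGlue (x - y) := by
          rw [hBdef, hsE, mul_assoc, ← Real.exp_add]
          linarith only [mul_le_mul_of_nonneg_left hge1 hbase]
        have hcube2 : (x-y)^3 ≤ x^3 := pow_le_pow_left₀ hs0 hsx 3
        linarith only [hgy₀, hvy, hBE, hcube2,
          mul_nonneg hK'pos.le (sub_nonneg.mpr hsx), hs0,
          mul_pos hεpos hh0, mul_nonneg hεpos.le hs0]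
    · rcases le_or_gt y (x+T) with h2 | h2
      · exact hy₀min' y ⟨le_of_lt h1, h2⟩
      · have hAy := hA2 x y (le_of_lt hx) (by linarith)
        rw [hgval y, hE0 y (by linarith)]
        have hTt : T^2*(y-x) = 6*ε*(y-x) := by rw [hT2]
        have hcube3 : ε*(y-x) ≤ (y-x)^3/6 := by
          nlinarith only [mul_nonneg (mul_nonneg (show (0:ℝ) ≤ y - x by linarith)
            (show (0:ℝ) ≤ y - x - T by linarith)) (show (0:ℝ) ≤ y - x + T by linarith), hTt]
        linarith only [hgy₀, hAy, hcube3, mul_pos hεpos hh0]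
  -- apply the supersolution property at y₀
  have hy₀pos : 0 < y₀ := lt_trans hx hy₀x
  have hsup := hsuper y₀ (mem_Ioi.mpr hy₀pos) φ hφC2 hmin
  have hLs : Lstar p β c r σ F v φ y₀ ≤ 0 := le_trans (le_max_right _ _) hsup
  unfold Lstar at hLs
  have hbdd : BddAbove (Set.range fun γ : Icc (0:ℝ) 1 => Lg p β c r σ F (γ:ℝ) v φ y₀) := by
    have hc : Continuous fun γ : ℝ => Lg p β c r σ F γ v φ y₀ := by
      unfold Lg; fun_prop
    have h2 : (Set.range fun γ : Icc (0:ℝ) 1 => Lg p β c r σ F (γ:ℝ) v φ y₀)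
        = (fun γ : ℝ => Lg p β c r σ F γ v φ y₀) '' (Icc 0 1) :=
      (Set.image_eq_range (fun γ : ℝ => Lg p β c r σ F γ v φ y₀) (Icc 0 1)).symm
    rw [h2]; exact (isCompact_Icc.image hc).bddAbove
  have hLg1 : Lg p β c r σ F 1 v φ y₀ ≤ 0 :=
    le_trans (le_ciSup hbdd ⟨1, Set.mem_Icc.mpr ⟨zero_le_one, le_rfl⟩⟩) hLs
  have hd1 : deriv φ y₀ = (1+ε) - (y₀-x)^2/2 := by
    rw [hφdef]; exact aux_deriv1 (v x) (1+ε) B x y₀ hy₀x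
  have hd2' : deriv (deriv φ) y₀ = -(y₀-x) := by
    rw [hφdef]; exact aux_deriv2 (v x) (1+ε) B x hy₀x
  have hkey : σ^2*1^2*y₀^2*(-(y₀-x))/2 + (p + r*1*y₀)*((1+ε) - (y₀-x)^2/2)
      - (c+β)*v y₀ + β*(∫ α in Icc (0:ℝ) y₀, v (y₀-α) ∂F.measure) ≤ 0 := by
    unfold Lg at hLg1
    rw [hd1, hd2'] at hLg1
    exact hLg1
  -- compare integrals
  have hy₀le1 : y₀ ≤ x + 1 := by linarith
  have hint1 : IntegrableOn (fun α => v (x - α)) (Icc 0 x) F.measure := by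
    apply ContinuousOn.integrableOn_compact isCompact_Icc
    apply hvcont.comp (continuous_const.sub continuous_id).continuousOn
    intro α hα
    simp only [mem_Icc, id_eq, Pi.sub_apply] at hα ⊢
    constructor
    · linarith [hα.2]
    · linarith [hα.1]
  have hint2 : IntegrableOn (fun α => v (y₀ - α)) (Icc 0 y₀) F.measure := by
    apply ContinuousOn.integrableOn_compact isCompact_Icc
    apply hvcont.comp (continuous_const.sub continuous_id).continuousOn
    intro α hα
    simp only [mem_Icc, id_eq, Pi.sub_apply] at hα ⊢
    constructor
    · linarith [hα.2]
    · linarith [hα.1]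
  have hint2a : IntegrableOn (fun α => v (y₀ - α)) (Icc 0 x) F.measure :=
    hint2.mono_set (Icc_subset_Icc le_rfl hy₀x.le)
  have hint3 : IntegrableOn (fun α => v (y₀ - α)) (Ioc x y₀) F.measure :=
    hint2.mono_set (fun a ha => ⟨le_trans hx.le ha.1.le, ha.2⟩)
  have hdisj : Disjoint (Icc (0:ℝ) x) (Ioc x y₀) := by
    rw [Set.disjoint_left]
    intro a ha hb
    exact absurd ha.2 (not_le.mpr hb.1)
  have hsplit : (∫ α in Icc (0:ℝ) y₀, v (y₀-α) ∂F.measure)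
      = (∫ α in Icc (0:ℝ) x, v (y₀-α) ∂F.measure)
        + ∫ α in Ioc x y₀, v (y₀-α) ∂F.measure := by
    rw [← setIntegral_union hdisj measurableSet_Ioc hint2a hint3,
      Icc_union_Ioc_eq_Icc (le_of_lt hx) (le_of_lt hy₀x)]
  have hmono : (∫ α in Icc (0:ℝ) x, v (x-α) ∂F.measure)
      ≤ ∫ α in Icc (0:ℝ) x, v (y₀-α) ∂F.measure := by
    apply setIntegral_mono_on hint1 hint2a measurableSet_Icc
    intro α hα
    have h9 := hA2 (x-α) (y₀-α) (by linarith [hα.2]) (by linarith)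
    linarith
  have hIoc_lt : F.measure (Ioc x y₀) < ⊤ := by
    rw [F.measure_Ioc]; exact ENNReal.ofReal_lt_top
  have hFmono : 0 ≤ F y₀ - F x := sub_nonneg.mpr (F.mono hy₀x.le)
  have hJ3 : |∫ α in Ioc x y₀, v (y₀-α) ∂F.measure| ≤ M * (F y₀ - F x) := by
    have hbound : ∀ α ∈ Ioc x y₀, ‖v (y₀-α)‖ ≤ M := by
      intro α hα
      rw [Real.norm_eq_abs]
      exact hvM _ ⟨by linarith [hα.2], by linarith [hα.1]⟩
    have h10 := norm_setIntegral_le_of_norm_le_const hIoc_lt hbound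
    rw [Real.norm_eq_abs, measureReal_def, F.measure_Ioc, ENNReal.toReal_ofReal hFmono] at h10
    exact h10
  have hii : ∀ a b : ℝ, IntervalIntegrable f volume a b := by
    intro a b
    rw [intervalIntegrable_iff]
    apply Integrable.mono' (g := fun _ => Cf)
      ((integrableOn_const measure_Ioc_lt_top.ne) :
        IntegrableOn (fun _ => Cf) (Set.uIoc a b) volume)
      (hfmeas.aestronglyMeasurable.restrict)
    filter_upwards with t
    rw [Real.norm_eq_abs]
    exact hfC t
  have hFlip : F y₀ - F x ≤ Cf * (y₀ - x) := by
    have h01 := intervalIntegral.integral_add_adjacent_intervals (hii 0 x) (hii x y₀)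
    have hle : (∫ t in x..y₀, f t) ≤ ∫ t in x..y₀, (Cf : ℝ) := by
      apply intervalIntegral.integral_mono_on (le_of_lt hy₀x) (hii x y₀)
        intervalIntegrable_const
      intro t _
      exact (abs_le.mp (hfC t)).2
    rw [intervalIntegral.integral_const, smul_eq_mul] at hle
    rw [hfF x, hfF y₀]
    linarith only [h01, hle]
  have hJfinal : (∫ α in Icc (0:ℝ) x, v (x-α) ∂F.measure)
      ≤ (∫ α in Icc (0:ℝ) y₀, v (y₀-α) ∂F.measure) + M*(Cf*(y₀-x)) := by
    have habs := neg_abs_le (∫ α in Ioc x y₀, v (y₀-α) ∂F.measure)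
    have h11 : M * (F y₀ - F x) ≤ M * (Cf*(y₀-x)) := by
      apply mul_le_mul_of_nonneg_left _ hM0
      linarith
    rw [hsplit]
    linarith only [habs, h11, hJ3, hmono]
  have hvy₀ : v y₀ - v x ≤ 2*(y₀-x) := by
    have h12 := hgy₀
    rw [hgval y₀, hE0 y₀ hy₀x.le] at h12
    linarith only [h12, pow_pos (show (0:ℝ) < y₀ - x by linarith) 3,
      mul_pos hεpos hh0,
      mul_nonneg (show (0:ℝ) ≤ 1 - ε by linarith) (show (0:ℝ) ≤ y₀ - x by linarith)]
  exact aux_final p β c r σ x y₀ T ε (v x) (v y₀)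
    (∫ α in Icc (0:ℝ) x, v (x-α) ∂F.measure)
    (∫ α in Icc (0:ℝ) y₀, v (y₀-α) ∂F.measure) M Cf
    hβ (by linarith) hσ hx hεpos hp hr hy₀x hy₀T hT1 hT2 hM0 hCf hkey hvy₀ hJfinal
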